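/- On su(2) ⊕ su(2) with dual basis E¹,E²,E³,F¹,F²,F³ satisfying dE¹ = −2E²∧E³, dE² = 2E¹∧E³, dE³ = −2E¹∧E², dF¹ = −2F²∧F³, dF² = 2F¹∧F³, dF³ = −2F¹∧F², the complex forms ψ¹ = E¹+iE², ψ² = F¹+iF², ψ³ = E³+iF³ satisfy dψ¹ = iψ¹∧ψ³ + iψ¹∧ψ̄³, dψ² = ψ²∧ψ³ − ψ²∧ψ̄³, dψ³ = −iψ¹∧ψ̄¹ + ψ²∧ψ̄². -/
import Mathlib


noncomputable section


/-- On `su(2) ⊕ su(2)` with dual basis `E¹,E²,E³,F¹,F²,F³`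
satisfying `dE¹ = −2E²∧E³`, `dE² = 2E¹∧E³`, `dE³ = −2E¹∧E²`,
`dF¹ = −2F²∧F³`, `dF² = 2F¹∧F³`, `dF³ = −2F¹∧F²`, the complex forms
`ψ¹ = E¹+iE²`, `ψ² = F¹+iF²`, `ψ³ = E³+iF³` satisfy
`dψ¹ = iψ¹∧ψ³ + iψ¹∧ψ̄³`, `dψ² = ψ²∧ψ³ − ψ²∧ψ̄³`,
`dψ³ = −iψ¹∧ψ̄¹ + ψ²∧ψ̄²`  (where `ψ̄¹ = E¹−iE²`, `ψ̄² = F¹−iF²`,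
`ψ̄³ = E³−iF³`). -/
theorem calabi_eckmann_structure_equations
    {A : Type*} [Ring A] [Algebra ℂ A]
    (e1 e2 e3 f1 f2 f3 : A) (d : A →ₗ[ℂ] A)
    (hanti : ∀ x ∈ ({e1, e2, e3, f1, f2, f3} : Set A),
      ∀ y ∈ ({e1, e2, e3, f1, f2, f3} : Set A), x * y = -(y * x))
    (he1 : d e1 = (-2 : ℂ) • (e2 * e3)) (he2 : d e2 = (2 : ℂ) • (e1 * e3))
    (he3 : d e3 = (-2 : ℂ) • (e1 * e2))
    (hf1 : d f1 = (-2 : ℂ) • (f2 * f3)) (hf2 : d f2 = (2 : ℂ) • (f1 * f3))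
    (hf3 : d f3 = (-2 : ℂ) • (f1 * f2))
    (ψ1 ψ2 ψ3 ψb1 ψb2 ψb3 : A)
    (hψ1 : ψ1 = e1 + Complex.I • e2) (hψ2 : ψ2 = f1 + Complex.I • f2)
    (hψ3 : ψ3 = e3 + Complex.I • f3)
    (hψb1 : ψb1 = e1 - Complex.I • e2) (hψb2 : ψb2 = f1 - Complex.I • f2)
    (hψb3 : ψb3 = e3 - Complex.I • f3) :
    d ψ1 = Complex.I • (ψ1 * ψ3) + Complex.I • (ψ1 * ψb3) ∧
    d ψ2 = ψ2 * ψ3 - ψ2 * ψb3 ∧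
    d ψ3 = -(Complex.I • (ψ1 * ψb1)) + ψ2 * ψb2 := by
  have mem : ∀ x ∈ ({e1, e2, e3, f1, f2, f3} : Set A), True := fun _ _ => trivial
  have sq : ∀ x ∈ ({e1, e2, e3, f1, f2, f3} : Set A), x * x = 0 := by
    intro x hx
    have h := hanti x hx x hx
    have h2 : (2 : ℂ) • (x * x) = 0 := by
      rw [two_smul]; nth_rewrite 2 [h]; exact add_neg_cancel _
    have := congrArg (fun y => (2⁻¹ : ℂ) • y) h2
    simpa [smul_smul] using this
  have h11 : e1 * e1 = 0 := sq e1 (by simp)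
  have h22 : e2 * e2 = 0 := sq e2 (by simp)
  have h44 : f1 * f1 = 0 := sq f1 (by simp)
  have h55 : f2 * f2 = 0 := sq f2 (by simp)
  have h21 : e2 * e1 = -(e1 * e2) := hanti e2 (by simp) e1 (by simp)
  have h54 : f2 * f1 = -(f1 * f2) := hanti f2 (by simp) f1 (by simp)
  subst hψ1 hψ2 hψ3 hψb1 hψb2 hψb3
  refine ⟨?_, ?_, ?_⟩ <;>
  · simp only [map_add, map_smul, map_sub, he1, he2, he3, hf1, hf2, hf3,
      mul_add, add_mul, mul_sub, sub_mul, smul_mul_assoc, mul_smul_comm,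
      smul_smul, smul_add, smul_sub, Complex.I_mul_I, h11, h22, h44, h55,
      h21, h54, smul_neg, smul_zero, neg_smul, neg_neg]
    module
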